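/- arXiv:2303.14671 — 2 statements merged into one kernel-verified Lean document; each statement's English description precedes it below -/
import Mathlib

section
/- Let G be a finite median graph and H a convex subgraph of G. Then the crossing graph H^# of H is isomorphic to the induced subgraph of G^# on the set of Θ-classes of G that occur in H, via the map sending each Θ-class of H to the unique Θ-class of G containing it. In particular, H^# is (isomorphic to) an induced subgraph of G^#. -/
open SimpleGraph Polynomial

/-- The hypercube `Q_n`: vertices are functions `Fin n → Bool`, two vertices adjacent
iff they differ in exactly one coordinate. -/
def hypercube (n : ℕ) : SimpleGraph (Fin n → Bool) where
  Adj x y := ∃! i, x i ≠ y i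
  symm := ⟨by
    rintro x y ⟨i, hi, hu⟩
    exact ⟨i, hi.symm, fun j hj => hu j hj.symm⟩⟩
  loopless := ⟨by
    rintro x ⟨i, hi, -⟩
    exact hi rfl⟩

/-- `f` is an isometric embedding of `G` into `H` (distances are preserved); its image is
an isometric subgraph of `H`. -/
def IsIsometricEmbedding {V W : Type*} (G : SimpleGraph V) (H : SimpleGraph W)
    (f : V → W) : Prop :=
  Function.Injective f ∧ ∀ u v : V, H.dist (f u) (f v) = G.dist u v

/-- A partial cube: a connected graph isomorphic to an isometric subgraph of some hypercube. -/
def IsPartialCube {V : Type*} (G : SimpleGraph V) : Prop :=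
  G.Connected ∧ ∃ (n : ℕ) (f : V → (Fin n → Bool)), IsIsometricEmbedding G (hypercube n) f

/-- The Djoković–Winkler relation on (unordered) edges: `e = uv` and `f = xy` are related iff
`d(u,x) + d(v,y) ≠ d(u,y) + d(v,x)`. -/
def DWRel {V : Type*} (G : SimpleGraph V) (e f : Sym2 V) : Prop :=
  ∃ u v x y : V, e = s(u, v) ∧ f = s(x, y) ∧
    G.dist u x + G.dist v y ≠ G.dist u y + G.dist v x

/-- The set of edges of `G` that are Θ-related to `e`. -/
def thetaClassOf {V : Type*} (G : SimpleGraph V) (e : Sym2 V) : Set (Sym2 V) :=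
  {f | f ∈ G.edgeSet ∧ DWRel G e f}

/-- `C` is a Θ-class of `G`: the class of some edge of `G` under the Djoković–Winkler
relation. -/
def IsThetaClass {V : Type*} (G : SimpleGraph V) (C : Set (Sym2 V)) : Prop :=
  ∃ e ∈ G.edgeSet, C = thetaClassOf G e

/-- `W_{uv}`: the set of vertices strictly closer to `u` than to `v`. -/
def sideW {V : Type*} (G : SimpleGraph V) (u v : V) : Set V :=
  {w | G.dist u w < G.dist v w}

/-- Two Θ-classes `C₁ = F_{ab}` and `C₂ = F_{uv}` cross: all four sets
`W_{ab} ∩ W_{uv}`, `W_{ba} ∩ W_{uv}`, `W_{ab} ∩ W_{vu}`, `W_{ba} ∩ W_{vu}` are nonempty. -/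
def Crosses {V : Type*} (G : SimpleGraph V) (C₁ C₂ : Set (Sym2 V)) : Prop :=
  ∃ a b u v : V, G.Adj a b ∧ G.Adj u v ∧
    C₁ = thetaClassOf G s(a, b) ∧ C₂ = thetaClassOf G s(u, v) ∧
    (sideW G a b ∩ sideW G u v).Nonempty ∧ (sideW G b a ∩ sideW G u v).Nonempty ∧
    (sideW G a b ∩ sideW G v u).Nonempty ∧ (sideW G b a ∩ sideW G v u).Nonempty

lemma Crosses.symm {V : Type*} {G : SimpleGraph V} {C₁ C₂ : Set (Sym2 V)}
    (h : Crosses G C₁ C₂) : Crosses G C₂ C₁ := by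
  obtain ⟨a, b, u, v, hab, huv, h1, h2, n1, n2, n3, n4⟩ := h
  refine ⟨u, v, a, b, huv, hab, h2, h1, ?_, ?_, ?_, ?_⟩ <;> rw [Set.inter_comm]
  exacts [n1, n3, n2, n4]

/-- The crossing graph `G^#` of a partial cube `G`: vertices are the Θ-classes of `G`,
two Θ-classes being adjacent iff they cross. -/
def crossingGraph {V : Type*} (G : SimpleGraph V) :
    SimpleGraph {C : Set (Sym2 V) // IsThetaClass G C} where
  Adj C₁ C₂ := C₁ ≠ C₂ ∧ Crosses G C₁.1 C₂.1
  symm := ⟨fun _ _ h => ⟨h.1.symm, h.2.symm⟩⟩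
  loopless := ⟨fun _ h => h.1 rfl⟩

/-- A median graph: a connected graph in which every triple of vertices has a unique median. -/
def IsMedianGraph {V : Type*} (G : SimpleGraph V) : Prop :=
  G.Connected ∧ ∀ u v w : V, ∃! x : V,
    G.dist u x + G.dist x v = G.dist u v ∧
    G.dist u x + G.dist x w = G.dist u w ∧
    G.dist v x + G.dist x w = G.dist v w

/-- `α_i(G)`: the number of induced subgraphs of `G` isomorphic to the `i`-cube. -/
noncomputable def cubeCount {V : Type*} (G : SimpleGraph V) (i : ℕ) : ℕ :=
  Nat.card {s : Set V // Nonempty ((G.induce s) ≃g hypercube i)}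

/-- The cube polynomial `C(G,x) = Σ_i α_i(G) xⁱ`. -/
noncomputable def cubePoly {V : Type*} [Finite V] (G : SimpleGraph V) : Polynomial ℕ :=
  ∑ i ∈ Finset.range (Nat.card V + 1), Polynomial.C (cubeCount G i) * Polynomial.X ^ i

/-- `a_i(G)`: the number of `i`-cliques of `G` (note `a_0 = 1`, the empty clique). -/
noncomputable def cliqueCount {V : Type*} (G : SimpleGraph V) (i : ℕ) : ℕ :=
  Nat.card {s : Finset V // G.IsNClique i s}

/-- The clique polynomial `Cl(G,x) = Σ_i a_i(G) xⁱ`. -/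
noncomputable def cliquePoly {V : Type*} [Finite V] (G : SimpleGraph V) : Polynomial ℕ :=
  ∑ i ∈ Finset.range (Nat.card V + 1), Polynomial.C (cliqueCount G i) * Polynomial.X ^ i

/-- A set `S` of vertices is convex: every shortest path between vertices of `S`
stays inside `S`. -/
def ConvexSet {V : Type*} (G : SimpleGraph V) (S : Set V) : Prop :=
  ∀ u ∈ S, ∀ v ∈ S, ∀ p : G.Walk u v, p.length = G.dist u v → ∀ y ∈ p.support, y ∈ S

/-- The convex hull of a vertex set: the smallest convex set containing it. -/
def gConvexHull {V : Type*} (G : SimpleGraph V) (S : Set V) : Set V :=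
  ⋂₀ {T : Set V | ConvexSet G T ∧ S ⊆ T}

/-- The Θ-class `θ` occurs in (the subgraph of `G` induced by) `S`. -/
def OccursIn {V : Type*} (G : SimpleGraph V) (θ : Set (Sym2 V)) (S : Set V) : Prop :=
  ∃ a b : V, G.Adj a b ∧ a ∈ S ∧ b ∈ S ∧ s(a, b) ∈ θ

/-- A `θ₁,θ₂`-alternating 4-cycle `u v w x u`: edges `uv, xw ∈ θ₁` and `ux, vw ∈ θ₂`. -/
def AltFourCycle {V : Type*} (G : SimpleGraph V) (θ₁ θ₂ : Set (Sym2 V)) (u v w x : V) : Prop :=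
  G.Adj u v ∧ G.Adj v w ∧ G.Adj w x ∧ G.Adj x u ∧ u ≠ w ∧ v ≠ x ∧
  s(u, v) ∈ θ₁ ∧ s(x, w) ∈ θ₁ ∧ s(u, x) ∈ θ₂ ∧ s(v, w) ∈ θ₂

/-- A polynomial with nonnegative coefficients is unimodal. -/
def PolyUnimodal (P : Polynomial ℕ) : Prop :=
  ∃ m : ℕ, (∀ i, i < m → P.coeff i ≤ P.coeff (i + 1)) ∧
    (∀ i, m ≤ i → P.coeff (i + 1) ≤ P.coeff i)

section MedianBasics

variable {V : Type*} {G : SimpleGraph V}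

/-- median accessor -/
lemma dist_comm' (G : SimpleGraph V) (x y : V) : G.dist x y = G.dist y x :=
  SimpleGraph.dist_comm

lemma median_exists (hmed : IsMedianGraph G) (u v w : V) :
    ∃ x : V, (G.dist u x + G.dist x v = G.dist u v ∧
      G.dist u x + G.dist x w = G.dist u w ∧
      G.dist v x + G.dist x w = G.dist v w) :=
  ((hmed.2 u v w).exists)

lemma median_unique (hmed : IsMedianGraph G) {u v w x y : V}
    (hx : G.dist u x + G.dist x v = G.dist u v ∧
      G.dist u x + G.dist x w = G.dist u w ∧
      G.dist v x + G.dist x w = G.dist v w)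
    (hy : G.dist u y + G.dist y v = G.dist u v ∧
      G.dist u y + G.dist y w = G.dist u w ∧
      G.dist v y + G.dist y w = G.dist v w) : x = y := by
  obtain ⟨m, _, hu⟩ := hmed.2 u v w
  rw [hu x hx, hu y hy]

lemma adj_dist_one (h : G.Adj u v) : G.dist u v = 1 :=
  SimpleGraph.dist_eq_one_iff_adj.mpr h

/-- L0: distances from the endpoints of an edge to any vertex differ. -/
lemma adj_dist_ne (hmed : IsMedianGraph G) (h : G.Adj u v) (w : V) :
    G.dist u w ≠ G.dist v w := by
  obtain ⟨x, h1, h2, h3⟩ := median_exists hmed u v w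
  rw [adj_dist_one h] at h1
  have hx : x = u ∨ x = v := by
    have : G.dist u x = 0 ∨ G.dist x v = 0 := by omega
    rcases this with h0 | h0
    · exact Or.inl ((hmed.1.dist_eq_zero_iff).mp h0).symm
    · exact Or.inr ((hmed.1.dist_eq_zero_iff).mp h0)
  have hvu : G.dist x u + 1 = 1 + G.dist x u := by omega
  rcases hx with rfl | rfl
  · rw [SimpleGraph.dist_self, zero_add] at h2
    rw [show G.dist v x = 1 from by rw [SimpleGraph.dist_comm]; exact adj_dist_one h, h2] at h3
    omega
  · rw [SimpleGraph.dist_self, zero_add] at h3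
    rw [adj_dist_one h, h3] at h2
    omega

lemma adj_dist_cases (hmed : IsMedianGraph G) (h : G.Adj u v) (w : V) :
    G.dist v w = G.dist u w + 1 ∨ G.dist u w = G.dist v w + 1 := by
  have h1 : G.dist u w ≤ G.dist v w + 1 := by
    calc G.dist u w ≤ G.dist u v + G.dist v w := hmed.1.dist_triangle
    _ = _ := by rw [adj_dist_one h]; omega
  have h2 : G.dist v w ≤ G.dist u w + 1 := by
    calc G.dist v w ≤ G.dist v u + G.dist u w := hmed.1.dist_triangle
    _ = _ := by rw [show G.dist v u = 1 from by rw [SimpleGraph.dist_comm]; exact adj_dist_one h]; omega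
  have := adj_dist_ne hmed h w
  omega

lemma mem_sideW_iff {a b w : V} : w ∈ sideW G a b ↔ G.dist a w < G.dist b w := Iff.rfl

lemma sideW_trichotomy (hmed : IsMedianGraph G) (h : G.Adj a b) (w : V) :
    w ∈ sideW G a b ∨ w ∈ sideW G b a := by
  have := adj_dist_ne hmed h w
  rcases Nat.lt_or_ge (G.dist a w) (G.dist b w) with h' | h'
  · exact Or.inl h'
  · exact Or.inr (by simp only [mem_sideW_iff]; omega)

lemma sideW_disjoint {a b w : V} (h1 : w ∈ sideW G a b) (h2 : w ∈ sideW G b a) : False := by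
  simp only [mem_sideW_iff] at h1 h2; omega

lemma mem_sideW_iff' (hmed : IsMedianGraph G) (h : G.Adj a b) {w : V} :
    w ∈ sideW G a b ↔ G.dist b w = G.dist a w + 1 := by
  have := adj_dist_cases hmed h w
  simp only [mem_sideW_iff]
  omega

/-- distance along a chain of adjacent vertices -/
lemma chain_dist (hconn : G.Connected) {r : ℕ} {f : ℕ → V}
    (hadj : ∀ j, j < r → G.Adj (f j) (f (j+1))) :
    ∀ n i, i + n ≤ r → G.dist (f i) (f (i + n)) ≤ n := by
  intro n
  induction n with
  | zero => intro i _; simp [SimpleGraph.dist_self]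
  | succ n ih =>
    intro i hi
    calc G.dist (f i) (f (i + (n+1))) ≤ G.dist (f i) (f (i+n)) + G.dist (f (i+n)) (f (i+n+1)) :=
          hconn.dist_triangle
    _ ≤ n + 1 := by
        have h1 := ih i (by omega)
        have h2 : G.dist (f (i+n)) (f (i+n+1)) = 1 := adj_dist_one (hadj (i+n) (by omega))
        omega

/-- there is a neighbour one step closer -/
lemma exists_closer_neighbor (hconn : G.Connected) {u w : V} {n : ℕ}
    (h : G.dist u w = n + 1) :
    ∃ v, G.Adj u v ∧ G.dist v w = n := by
  obtain ⟨p, hp⟩ := (hconn u w).exists_walk_length_eq_dist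
  cases p with
  | nil => simp at hp; rw [SimpleGraph.dist_self] at h; omega
  | cons hadj q =>
    rename_i v
    refine ⟨v, hadj, le_antisymm ?_ ?_⟩
    · have := SimpleGraph.dist_le q
      simp [SimpleGraph.Walk.length_cons] at hp
      omega
    · have : G.dist u w ≤ G.dist u v + G.dist v w := hconn.dist_triangle
      rw [adj_dist_one hadj] at this
      omega

end MedianBasics
section MedianConvex

variable {V : Type*} {G : SimpleGraph V}

/-- The square contradiction: two vertices of `W_ab` at distance 2 cannot have a common
neighbour in `W_ba`. -/
lemma square_contradiction (hmed : IsMedianGraph G) {a b u v w : V} (hab : G.Adj a b)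
    (hu : u ∈ sideW G a b) (hw : w ∈ sideW G a b) (huw : G.dist u w = 2)
    (hv1 : G.Adj u v) (hv2 : G.Adj v w) (hv : v ∈ sideW G b a) : False := by
  have hconn := hmed.1
  set k := G.dist a u with hk
  have hbu : G.dist b u = k + 1 := (mem_sideW_iff' hmed hab).mp hu
  have hav' : G.dist a v = G.dist b v + 1 := (mem_sideW_iff' hmed hab.symm).mp hv
  have hcav := adj_dist_cases hmed hv1 a
  have hcbv := adj_dist_cases hmed hv1 b
  rw [dist_comm' G u a, dist_comm' G v a] at hcav
  rw [dist_comm' G u b, dist_comm' G v b] at hcbv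
  have hbv : G.dist b v = k := by omega
  have hav : G.dist a v = k + 1 := by omega
  have hbw' : G.dist b w = G.dist a w + 1 := (mem_sideW_iff' hmed hab).mp hw
  have hcaw := adj_dist_cases hmed hv2 a
  have hcbw := adj_dist_cases hmed hv2 b
  rw [dist_comm' G v a, dist_comm' G w a] at hcaw
  rw [dist_comm' G v b, dist_comm' G w b] at hcbw
  have haw : G.dist a w = k := by omega
  have hbw : G.dist b w = k + 1 := by omega
  obtain ⟨m, e1, e2, e3⟩ := median_exists hmed u w a
  rw [huw] at e1
  rw [dist_comm' G u a, ← hk] at e2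
  rw [dist_comm' G w a, haw] at e3
  have hma : G.dist m a = k - 1 ∧ k ≥ 1 ∧ G.dist u m = 1 ∧ G.dist m w = 1 ∧ G.dist w m = 1 := by
    have c1 : G.dist m w = G.dist w m := dist_comm' G m w
    omega
  obtain ⟨hma1, hk1, hum, hmw, hwm⟩ := hma
  have hmb : G.dist m b = k := by
    have t1 : G.dist m b ≤ G.dist m a + G.dist a b := hconn.dist_triangle
    have t2 : G.dist u b ≤ G.dist u m + G.dist m b := hconn.dist_triangle
    rw [adj_dist_one hab] at t1
    rw [dist_comm' G u b] at t2
    omega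
  have hmed1 : m = v := by
    apply median_unique hmed (u := u) (v := w) (w := b)
    · refine ⟨by omega, ?_, ?_⟩
      · rw [dist_comm' G u b, hbu, hum, hmb]; omega
      · rw [dist_comm' G w b, hbw, hwm, hmb]; omega
    · have d1 : G.dist u v = 1 := adj_dist_one hv1
      have d2 : G.dist v w = 1 := adj_dist_one hv2
      have d3 : G.dist w v = 1 := by rw [dist_comm' G w v]; exact d2
      have d4 : G.dist v b = k := by rw [dist_comm' G v b]; exact hbv
      refine ⟨by omega, ?_, ?_⟩
      · rw [dist_comm' G u b, hbu, d1, d4]; omega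
      · rw [dist_comm' G w b, hbw, d3, d4]; omega
  have : G.dist m a = k + 1 := by rw [hmed1, dist_comm' G v a]; exact hav
  omega

end MedianConvex
section BigInduction

variable {V : Type*} {G : SimpleGraph V}

lemma exists_descent (hmed : IsMedianGraph G) {a b : V} {r : ℕ} {f : ℕ → V}
    (hab : G.Adj a b) (_hu : f 0 ∈ sideW G a b) (hw : f r ∈ sideW G a b)
    (hchain : ∀ j, j < r → G.Adj (f j) (f (j+1))) (_hdist : G.dist (f 0) (f r) = r)
    (hwit : ∃ t, 0 < t ∧ t < r ∧ f t ∈ sideW G b a) :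
    ∃ i, i < r ∧ (∀ j, j ≤ i → G.dist a (f j) = G.dist a (f 0) + j) ∧
      G.dist a (f (i+1)) + 1 = G.dist a (f i) := by
  have hconn := hmed.1
  set k := G.dist a (f 0) with hk
  have hex : ∃ i, i < r ∧ G.dist a (f (i+1)) + 1 = G.dist a (f i) := by
    by_contra hno
    push_neg at hno
    have hasc : ∀ j, j ≤ r → G.dist a (f j) = k + j := by
      intro j hj
      induction j with
      | zero => simp [hk]
      | succ n ih =>
        have h1 := ih (by omega)
        have hc := adj_dist_cases hmed (hchain n (by omega)) a
        have c1 : G.dist (f n) a = G.dist a (f n) := dist_comm' G _ _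
        have c2 : G.dist (f (n+1)) a = G.dist a (f (n+1)) := dist_comm' G _ _
        have hnd := hno n (by omega)
        omega
    obtain ⟨t, ht0, htr, htb⟩ := hwit
    have h1 : G.dist a (f t) = G.dist b (f t) + 1 := (mem_sideW_iff' hmed hab.symm).mp htb
    have h2 : G.dist b (f r) = G.dist a (f r) + 1 := (mem_sideW_iff' hmed hab).mp hw
    have h3 : G.dist (f t) (f r) ≤ r - t := by
      have h := chain_dist hconn hchain (r - t) t (by omega)
      rwa [show t + (r-t) = r from by omega] at h
    have h4 : G.dist b (f r) ≤ G.dist b (f t) + G.dist (f t) (f r) := hconn.dist_triangle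
    have h5 := hasc t (le_of_lt htr)
    have h6 := hasc r (le_refl r)
    omega
  classical
  obtain ⟨i0, hi0r, hi0⟩ := hex
  have hP : ∃ i, G.dist a (f (i+1)) + 1 = G.dist a (f i) := ⟨i0, hi0⟩
  have hfind : Nat.find hP ≤ i0 := Nat.find_min' hP hi0
  have hfr : Nat.find hP < r := by omega
  refine ⟨Nat.find hP, hfr, ?_, Nat.find_spec hP⟩
  intro j hj
  induction j with
  | zero => simp [hk]
  | succ n ih =>
    have h1 := ih (by omega)
    have hc := adj_dist_cases hmed (hchain n (by omega)) a
    have c1 : G.dist (f n) a = G.dist a (f n) := dist_comm' G _ _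
    have c2 : G.dist (f (n+1)) a = G.dist a (f (n+1)) := dist_comm' G _ _
    have hnd : ¬ (G.dist a (f (n+1)) + 1 = G.dist a (f n)) := Nat.find_min hP (by omega)
    omega

lemma no_bad_aux (hmed : IsMedianGraph G) :
    ∀ μ : ℕ, ∀ (a b : V) (r : ℕ) (f : ℕ → V) (i : ℕ),
      G.Adj a b → f 0 ∈ sideW G a b → f r ∈ sideW G a b →
      (∀ j, j < r → G.Adj (f j) (f (j+1))) → G.dist (f 0) (f r) = r →
      (∃ t, 0 < t ∧ t < r ∧ f t ∈ sideW G b a) →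
      i < r → (∀ j, j ≤ i → G.dist a (f j) = G.dist a (f 0) + j) →
      (G.dist a (f (i+1)) + 1 = G.dist a (f i)) →
      r * r + r + i ≤ μ → False := by
  have hconn := hmed.1
  intro μ
  induction μ using Nat.strong_induction_on with
  | _ μ IH =>
  intro a b r f i hab hu hw hchain hdist hwit hir hascent hdescent hμ
  set k := G.dist a (f 0) with hk
  obtain ⟨t0, ht00, ht0r, ht0b⟩ := hwit
  have hr2 : 2 ≤ r := by omega
  obtain ⟨s, rfl⟩ : ∃ s, r = s + 1 := ⟨r - 1, by omega⟩
  have hsq : (s+1)*(s+1) = s*s + 2*s + 1 := by ring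
  rw [hsq] at hμ
  rcases Nat.eq_zero_or_pos i with rfl | hipos
  · -- i = 0 : first step descends, f 1 ∈ W_ab, drop first vertex
    have h1 : G.dist a (f 1) + 1 = k := hdescent
    have hbu : G.dist b (f 0) = k + 1 := (mem_sideW_iff' hmed hab).mp hu
    have hf1ab : f 1 ∈ sideW G a b := by
      have t1 : G.dist b (f 0) ≤ G.dist b (f 1) + G.dist (f 1) (f 0) := hconn.dist_triangle
      have t2 : G.dist (f 1) (f 0) = 1 := by
        rw [dist_comm' G (f 1) (f 0)]; exact adj_dist_one (hchain 0 (by omega))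
      have : G.dist a (f 1) < G.dist b (f 1) := by omega
      exact this
    set g : ℕ → V := fun j => f (j + 1) with hg
    have hgchain : ∀ j, j < s → G.Adj (g j) (g (j+1)) := by
      intro j hj; exact hchain (j+1) (by omega)
    have hgw : g s ∈ sideW G a b := hw
    have hgu : g 0 ∈ sideW G a b := hf1ab
    have hgdist : G.dist (g 0) (g s) = s := by
      apply le_antisymm
      · have h := chain_dist hconn hgchain s 0 (by omega)
        simpa using h
      · have t1 : G.dist (f 0) (f (s+1)) ≤ G.dist (f 0) (f 1) + G.dist (f 1) (f (s+1)) :=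
          hconn.dist_triangle
        have t2 : G.dist (f 0) (f 1) = 1 := adj_dist_one (hchain 0 (by omega))
        have t3 : s + 1 ≤ 1 + G.dist (f 1) (f (s+1)) := by omega
        have : s ≤ G.dist (f 1) (f (s+1)) := by omega
        exact this
    have hgwit : ∃ t, 0 < t ∧ t < s ∧ g t ∈ sideW G b a := by
      have ht1 : t0 ≠ 1 := by
        intro h
        exact sideW_disjoint (a := a) (b := b) (by rw [← h] at hf1ab; exact hf1ab) ht0b
      refine ⟨t0 - 1, by omega, by omega, ?_⟩
      show f (t0 - 1 + 1) ∈ _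
      rw [show t0 - 1 + 1 = t0 from by omega]
      exact ht0b
    obtain ⟨i', hi'r, hasc', hdesc'⟩ :=
      exists_descent hmed hab hgu hgw hgchain hgdist hgwit
    have hmul : s * s ≤ s * s := le_refl _
    exact IH (s*s + s + i') (by omega) a b s g i' hab hgu hgw hgchain hgdist hgwit
      hi'r hasc' hdesc' (le_refl _)
  · -- i ≥ 1
    have ha_im1 : G.dist a (f (i-1)) = k + (i-1) := hascent (i-1) (by omega)
    have ha_i : G.dist a (f i) = k + i := hascent i (le_refl i)
    have hadj1 : G.Adj (f (i-1)) (f i) := by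
      have h := hchain (i-1) (by omega)
      rwa [show i - 1 + 1 = i from by omega] at h
    have hadj2 : G.Adj (f i) (f (i+1)) := hchain i (by omega)
    have hd2 : G.dist (f (i-1)) (f (i+1)) = 2 := by
      apply le_antisymm
      · have t1 : G.dist (f (i-1)) (f (i+1)) ≤
            G.dist (f (i-1)) (f i) + G.dist (f i) (f (i+1)) := hconn.dist_triangle
        rw [adj_dist_one hadj1, adj_dist_one hadj2] at t1
        exact t1
      · have c1 : G.dist (f 0) (f (i-1)) ≤ i - 1 := by
          have h := chain_dist hconn hchain (i-1) 0 (by omega)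
          simpa using h
        have c2 : G.dist (f (i+1)) (f (s+1)) ≤ s + 1 - (i+1) := by
          have h := chain_dist hconn hchain (s+1-(i+1)) (i+1) (by omega)
          rwa [show i + 1 + (s+1-(i+1)) = s+1 from by omega] at h
        have t1 : G.dist (f 0) (f (s+1)) ≤
            G.dist (f 0) (f (i-1)) + G.dist (f (i-1)) (f (s+1)) := hconn.dist_triangle
        have t2 : G.dist (f (i-1)) (f (s+1)) ≤
            G.dist (f (i-1)) (f (i+1)) + G.dist (f (i+1)) (f (s+1)) := hconn.dist_triangle
        omega
    obtain ⟨m, e1, e2, e3⟩ := median_exists hmed (f (i-1)) (f (i+1)) a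
    rw [hd2] at e1
    rw [show G.dist (f (i-1)) a = k + (i-1) from by
      rw [dist_comm' G (f (i-1)) a]; exact ha_im1] at e2
    rw [show G.dist (f (i+1)) a = k + i - 1 from by
      rw [dist_comm' G (f (i+1)) a]; omega] at e3
    have hm1 : G.dist (f (i-1)) m = 1 ∧ G.dist m (f (i+1)) = 1 ∧
        G.dist m a + 1 = k + i - 1 := by
      have c1 : G.dist m (f (i+1)) = G.dist (f (i+1)) m := dist_comm' G _ _
      omega
    obtain ⟨hmx, hmy, hma⟩ := hm1
    have ham : G.dist a m + 1 = k + i - 1 := by rw [dist_comm' G a m]; exact hma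
    have hadjxm : G.Adj (f (i-1)) m := SimpleGraph.dist_eq_one_iff_adj.mp hmx
    have hadjmy : G.Adj m (f (i+1)) := SimpleGraph.dist_eq_one_iff_adj.mp hmy
    classical
    set f' : ℕ → V := Function.update f i m with hf'
    have hf'i : f' i = m := Function.update_self i m f
    have hf'ne : ∀ j, j ≠ i → f' j = f j := fun j hj => Function.update_of_ne hj m f
    have hf'0 : f' 0 = f 0 := hf'ne 0 (by omega)
    have hf'r : f' (s+1) = f (s+1) := hf'ne (s+1) (by omega)
    have hchain' : ∀ j, j < s+1 → G.Adj (f' j) (f' (j+1)) := by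
      intro j hj
      by_cases h1 : j = i - 1
      · subst h1
        rw [hf'ne (i-1) (by omega), show i - 1 + 1 = i from by omega, hf'i]
        exact hadjxm
      · by_cases h2 : j = i
        · rw [h2, hf'i, hf'ne (i+1) (by omega)]
          exact hadjmy
        · rw [hf'ne j h2, hf'ne (j+1) (by omega)]
          exact hchain j hj
    have hdist' : G.dist (f' 0) (f' (s+1)) = s+1 := by rw [hf'0, hf'r]; exact hdist
    have hu' : f' 0 ∈ sideW G a b := by rw [hf'0]; exact hu
    have hw' : f' (s+1) ∈ sideW G a b := by rw [hf'r]; exact hw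
    rcases sideW_trichotomy hmed hab m with hmab | hmba
    · -- m ∈ W_ab
      by_cases hex : ∃ t, 0 < t ∧ t < s+1 ∧ t ≠ i ∧ f t ∈ sideW G b a
      · obtain ⟨t, ht0, htr, htne, htb⟩ := hex
        rcases Nat.lt_or_ge t i with hti | hti
        · -- left sub-config: from f' 0 to f' i = m, length i
          have hsubchain : ∀ j, j < i → G.Adj (f' j) (f' (j+1)) :=
            fun j hj => hchain' j (by omega)
          have hdm : G.dist (f' 0) (f' i) = i := by
            apply le_antisymm
            · have h := chain_dist hconn hchain' i 0 (by omega)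
              simpa using h
            · have t1 : G.dist (f' 0) (f' (s+1)) ≤
                  G.dist (f' 0) (f' i) + G.dist (f' i) (f' (s+1)) := hconn.dist_triangle
              have t2 : G.dist (f' i) (f' (s+1)) ≤ s+1-i := by
                have h := chain_dist hconn hchain' (s+1-i) i (by omega)
                rwa [show i + (s+1-i) = s+1 from by omega] at h
              omega
          have hwit' : ∃ t', 0 < t' ∧ t' < i ∧ f' t' ∈ sideW G b a :=
            ⟨t, ht0, hti, by rw [hf'ne t htne]; exact htb⟩
          have hw'' : f' i ∈ sideW G a b := by rw [hf'i]; exact hmab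
          obtain ⟨i'', hi''r, hasc'', hdesc''⟩ :=
            exists_descent hmed hab hu' hw'' hsubchain hdm hwit'
          have hile : i ≤ s := by omega
          have hmul : i * i ≤ s * s := Nat.mul_le_mul hile hile
          exact IH (i*i + i + i'') (by omega) a b i f' i'' hab hu' hw'' hsubchain hdm
            hwit' hi''r hasc'' hdesc'' (le_refl _)
        · -- right sub-config: from f' i = m to f' (s+1), length s+1-i
          have hti2 : i < t := by omega
          set g : ℕ → V := fun j => f' (i + j) with hg
          have hgchain : ∀ j, j < s+1-i → G.Adj (g j) (g (j+1)) := by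
            intro j hj
            exact hchain' (i+j) (by omega)
          have hgu : g 0 ∈ sideW G a b := by
            show f' (i+0) ∈ _
            rw [show i + 0 = i from rfl, hf'i]; exact hmab
          have hgw : g (s+1-i) ∈ sideW G a b := by
            show f' (i + (s+1-i)) ∈ _
            rw [show i + (s+1-i) = s+1 from by omega, hf'r]; exact hw
          have hgdist : G.dist (g 0) (g (s+1-i)) = s+1-i := by
            apply le_antisymm
            · have h := chain_dist hconn hgchain (s+1-i) 0 (by omega)
              simpa using h
            · have t1 : G.dist (f' 0) (f' (s+1)) ≤
                  G.dist (f' 0) (f' i) + G.dist (f' i) (f' (s+1)) := hconn.dist_triangle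
              have t2 : G.dist (f' 0) (f' i) ≤ i := by
                have h := chain_dist hconn hchain' i 0 (by omega)
                simpa using h
              have hq : G.dist (g 0) (g (s+1-i)) = G.dist (f' i) (f' (s+1)) := by
                show G.dist (f' (i+0)) (f' (i + (s+1-i))) = _
                rw [show i + 0 = i from rfl, show i + (s+1-i) = s+1 from by omega]
              omega
          have hgwit : ∃ t', 0 < t' ∧ t' < s+1-i ∧ g t' ∈ sideW G b a := by
            refine ⟨t - i, by omega, by omega, ?_⟩
            show f' (i + (t-i)) ∈ _
            rw [show i + (t-i) = t from by omega, hf'ne t htne]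
            exact htb
          obtain ⟨i'', hi''r, hasc'', hdesc''⟩ :=
            exists_descent hmed hab hgu hgw hgchain hgdist hgwit
          have hile : s+1-i ≤ s := by omega
          have hmul : (s+1-i) * (s+1-i) ≤ s * s := Nat.mul_le_mul hile hile
          exact IH ((s+1-i)*(s+1-i) + (s+1-i) + i'') (by omega) a b (s+1-i) g i'' hab
            hgu hgw hgchain hgdist hgwit hi''r hasc'' hdesc'' (le_refl _)
      · -- no other witness: f i ∈ W_ba, square contradiction
        push_neg at hex
        have hfi : f i ∈ sideW G b a := by
          have ht0i : t0 = i := by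
            by_contra hne
            exact hex t0 ht00 ht0r hne ht0b
          rw [← ht0i]; exact ht0b
        have hxm1 : f (i-1) ∈ sideW G a b := by
          rcases Nat.eq_zero_or_pos (i-1) with h0 | hpos
          · rw [h0]; exact hu
          · rcases sideW_trichotomy hmed hab (f (i-1)) with h | h
            · exact h
            · exact absurd h (hex (i-1) hpos (by omega) (by omega))
        have hxp1 : f (i+1) ∈ sideW G a b := by
          rcases Nat.eq_or_lt_of_le (show i+1 ≤ s+1 from by omega) with heq | hlt
          · rw [heq]; exact hw
          · rcases sideW_trichotomy hmed hab (f (i+1)) with h | h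
            · exact h
            · exact absurd h (hex (i+1) (by omega) hlt (by omega))
        exact square_contradiction hmed hab hxm1 hxp1 hd2 hadj1 hadj2 hfi
    · -- m ∈ W_ba : recurse at i-1 with f'
      have hwit' : ∃ t, 0 < t ∧ t < s+1 ∧ f' t ∈ sideW G b a :=
        ⟨i, by omega, by omega, by rw [hf'i]; exact hmba⟩
      have hasc' : ∀ j, j ≤ i-1 → G.dist a (f' j) = G.dist a (f' 0) + j := by
        intro j hj
        rw [hf'0, hf'ne j (by omega)]
        exact hascent j (by omega)
      have hdesc' : G.dist a (f' (i-1+1)) + 1 = G.dist a (f' (i-1)) := by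
        rw [show i-1+1 = i from by omega, hf'i, hf'ne (i-1) (by omega), ha_im1]
        omega
      exact IH ((s*s + 2*s + 1) + (s+1) + (i-1)) (by omega) a b (s+1) f' (i-1) hab hu' hw'
        hchain' hdist' hwit' (by omega) hasc' hdesc' (by omega)

end BigInduction
section ThetaMachinery

variable {V : Type*} {G : SimpleGraph V}

/-- Sides `W_ab` are convex (in the betweenness sense) in a median graph. -/
lemma sideW_convex (hmed : IsMedianGraph G) {a b x y v : V} (hab : G.Adj a b)
    (hx : x ∈ sideW G a b) (hy : y ∈ sideW G a b)
    (hbet : G.dist x v + G.dist v y = G.dist x y) : v ∈ sideW G a b := by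
  have hconn := hmed.1
  by_contra hvb
  have hv : v ∈ sideW G b a := (sideW_trichotomy hmed hab v).resolve_left hvb
  obtain ⟨p, hp⟩ := (hconn x v).exists_walk_length_eq_dist
  obtain ⟨q, hq⟩ := (hconn v y).exists_walk_length_eq_dist
  set r := G.dist x y with hr
  set t := G.dist x v with ht
  have hlen : (p.append q).length = r := by
    rw [SimpleGraph.Walk.length_append, hp, hq, hbet]
  set f : ℕ → V := fun j => (p.append q).getVert j with hf
  have hf0 : f 0 = x := SimpleGraph.Walk.getVert_zero _
  have hfr : f r = y := by
    show (p.append q).getVert r = y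
    rw [← hlen]
    exact SimpleGraph.Walk.getVert_length _
  have hchain : ∀ j, j < r → G.Adj (f j) (f (j+1)) := by
    intro j hj
    exact SimpleGraph.Walk.adj_getVert_succ _ (by omega)
  have hft : f t = v := by
    show (p.append q).getVert t = v
    rw [SimpleGraph.Walk.getVert_append]
    rw [if_neg (by omega), hp]
    simp
  have ht0 : 0 < t := by
    by_contra hcon
    have hxv : x = v := hconn.dist_eq_zero_iff.mp (by omega)
    rw [← hxv] at hv
    exact sideW_disjoint hx hv
  have htr : t < r := by
    by_contra hcon
    have hd : G.dist v y = 0 := by omega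
    have hvy : v = y := hconn.dist_eq_zero_iff.mp hd
    rw [hvy] at hv
    exact sideW_disjoint hy hv
  have hdist : G.dist (f 0) (f r) = r := by rw [hf0, hfr]
  have hwit : ∃ t', 0 < t' ∧ t' < r ∧ f t' ∈ sideW G b a := ⟨t, ht0, htr, by rw [hft]; exact hv⟩
  have hxf : f 0 ∈ sideW G a b := by rw [hf0]; exact hx
  have hyf : f r ∈ sideW G a b := by rw [hfr]; exact hy
  obtain ⟨i, hirr, hasc, hdesc⟩ := exists_descent hmed hab hxf hyf hchain hdist hwit
  exact no_bad_aux hmed (r*r + r + i) a b r f i hab hxf hyf hchain hdist hwit hirr hasc hdesc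
    (le_refl _)

/-- If the edge `uv` crosses the cut of `ab`, then `W_ab ⊆ W_uv`. -/
lemma sideW_subset_of_cross (hmed : IsMedianGraph G) {a b u v : V} (hab : G.Adj a b)
    (huv : G.Adj u v) (hu : u ∈ sideW G a b) (hv : v ∈ sideW G b a) :
    sideW G a b ⊆ sideW G u v := by
  intro w hw
  obtain ⟨m, h1, h2, h3⟩ := median_exists hmed u v w
  rw [adj_dist_one huv] at h1
  have hm : m = u ∨ m = v := by
    have : G.dist u m = 0 ∨ G.dist m v = 0 := by omega
    rcases this with h0 | h0
    · exact Or.inl ((hmed.1.dist_eq_zero_iff).mp h0).symm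
    · exact Or.inr ((hmed.1.dist_eq_zero_iff).mp h0)
  rcases hm with hmu | hmv
  · -- m = u : d v w = 1 + d u w
    rw [hmu] at h3
    have hvu : G.dist v u = 1 := by rw [dist_comm' G v u]; exact adj_dist_one huv
    show G.dist u w < G.dist v w
    omega
  · -- m = v : v between u and w : contradiction with convexity
    exfalso
    rw [hmv] at h2
    exact sideW_disjoint (sideW_convex hmed hab hu hw h2) hv

lemma cross_orient (hmed : IsMedianGraph G) {a b u v : V} (hab : G.Adj a b)
    (huv : G.Adj u v) (hu : u ∈ sideW G a b) (hv : v ∈ sideW G b a) :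
    a ∈ sideW G u v ∧ b ∈ sideW G v u := by
  set k := G.dist a u with hk
  have hbu : G.dist b u = k + 1 := (mem_sideW_iff' hmed hab).mp hu
  have hav : G.dist a v = G.dist b v + 1 := (mem_sideW_iff' hmed hab.symm).mp hv
  have hca := adj_dist_cases hmed huv a
  have hcb := adj_dist_cases hmed huv b
  have c1 : G.dist u a = G.dist a u := dist_comm' G _ _
  have c2 : G.dist v a = G.dist a v := dist_comm' G _ _
  have c3 : G.dist u b = G.dist b u := dist_comm' G _ _
  have c4 : G.dist v b = G.dist b v := dist_comm' G _ _
  constructor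
  · show G.dist u a < G.dist v a
    omega
  · show G.dist v b < G.dist u b
    omega

lemma sideW_cut_eq (hmed : IsMedianGraph G) {a b u v : V} (hab : G.Adj a b)
    (huv : G.Adj u v) (hu : u ∈ sideW G a b) (hv : v ∈ sideW G b a) :
    sideW G u v = sideW G a b := by
  obtain ⟨ha, hb⟩ := cross_orient hmed hab huv hu hv
  exact Set.Subset.antisymm (sideW_subset_of_cross hmed huv hab ha hb)
    (sideW_subset_of_cross hmed hab huv hu hv)

lemma dwrel_pair_iff {a b u v : V} :
    DWRel G s(a,b) s(u,v) ↔ G.dist a u + G.dist b v ≠ G.dist a v + G.dist b u := by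
  constructor
  · rintro ⟨x, y, p, q, he, hf, hne⟩
    rw [Sym2.eq_iff] at he hf
    rcases he with ⟨rfl, rfl⟩ | ⟨rfl, rfl⟩ <;> rcases hf with ⟨rfl, rfl⟩ | ⟨rfl, rfl⟩ <;> omega
  · intro h
    exact ⟨a, b, u, v, rfl, rfl, h⟩

lemma dwrel_iff_sides (hmed : IsMedianGraph G) {a b u v : V} (hab : G.Adj a b)
    (huv : G.Adj u v) :
    DWRel G s(a,b) s(u,v) ↔
      (u ∈ sideW G a b ∧ v ∈ sideW G b a) ∨ (v ∈ sideW G a b ∧ u ∈ sideW G b a) := by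
  rw [dwrel_pair_iff]
  rw [mem_sideW_iff' hmed hab, mem_sideW_iff' hmed hab.symm,
    mem_sideW_iff' hmed hab, mem_sideW_iff' hmed hab.symm]
  have cu := adj_dist_cases hmed hab u
  have cv := adj_dist_cases hmed hab v
  omega

lemma dwrel_self_edge {a b : V} (h : G.Adj a b) : DWRel G s(a,b) s(a,b) := by
  rw [dwrel_pair_iff]
  have h1 : G.dist a b = 1 := adj_dist_one h
  have h2 : G.dist b a = 1 := by rw [dist_comm' G b a]; exact h1
  simp [SimpleGraph.dist_self, h1, h2]

lemma thetaClassOf_eq_of_dwrel (hmed : IsMedianGraph G) {a b u v : V} (hab : G.Adj a b)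
    (huv : G.Adj u v) (h : DWRel G s(a,b) s(u,v)) :
    thetaClassOf G s(u,v) = thetaClassOf G s(a,b) := by
  rw [dwrel_iff_sides hmed hab huv] at h
  have key : ∀ (u' v' : V), G.Adj u' v' → u' ∈ sideW G a b → v' ∈ sideW G b a →
      thetaClassOf G s(u',v') = thetaClassOf G s(a,b) := by
    intro u' v' huv' hu' hv'
    have hW1 : sideW G u' v' = sideW G a b := sideW_cut_eq hmed hab huv' hu' hv'
    have hW2 : sideW G v' u' = sideW G b a :=
      sideW_cut_eq hmed hab.symm huv'.symm hv' hu'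
    ext e
    simp only [thetaClassOf, Set.mem_setOf_eq]
    induction e using Sym2.ind with
    | _ x y =>
      constructor
      · rintro ⟨hmem, hdw⟩
        refine ⟨hmem, ?_⟩
        rw [dwrel_iff_sides hmed huv' ((SimpleGraph.mem_edgeSet G).mp hmem), hW1, hW2] at hdw
        rw [dwrel_iff_sides hmed hab ((SimpleGraph.mem_edgeSet G).mp hmem)]
        exact hdw
      · rintro ⟨hmem, hdw⟩
        refine ⟨hmem, ?_⟩
        rw [dwrel_iff_sides hmed hab ((SimpleGraph.mem_edgeSet G).mp hmem)] at hdw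
        rw [dwrel_iff_sides hmed huv' ((SimpleGraph.mem_edgeSet G).mp hmem), hW1, hW2]
        exact hdw
  rcases h with ⟨hu, hv⟩ | ⟨hv, hu⟩
  · exact key u v huv hu hv
  · rw [Sym2.eq_swap]
    exact key v u huv.symm hv hu

lemma thetaClassOf_eq_of_mem (hmed : IsMedianGraph G) {a b : V} (hab : G.Adj a b)
    {e : Sym2 V} (he : e ∈ thetaClassOf G s(a,b)) :
    thetaClassOf G e = thetaClassOf G s(a,b) := by
  induction e using Sym2.ind with
  | _ u v =>
    exact thetaClassOf_eq_of_dwrel hmed hab ((SimpleGraph.mem_edgeSet G).mp he.1) he.2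

lemma mem_thetaClassOf_self {a b : V} (h : G.Adj a b) :
    s(a,b) ∈ thetaClassOf G s(a,b) :=
  ⟨(SimpleGraph.mem_edgeSet G).mpr h, dwrel_self_edge h⟩

/-- membership in a Θ-class in terms of the cut -/
lemma mem_thetaClassOf_iff (hmed : IsMedianGraph G) {a b x y : V} (hab : G.Adj a b)
    (hxy : G.Adj x y) :
    s(x,y) ∈ thetaClassOf G s(a,b) ↔
      (x ∈ sideW G a b ∧ y ∈ sideW G b a) ∨ (y ∈ sideW G a b ∧ x ∈ sideW G b a) := by
  constructor
  · rintro ⟨-, hdw⟩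
    exact (dwrel_iff_sides hmed hab hxy).mp hdw
  · intro h
    exact ⟨(SimpleGraph.mem_edgeSet G).mpr hxy, (dwrel_iff_sides hmed hab hxy).mpr h⟩

end ThetaMachinery
section InduceLemmas

variable {V : Type*} {G : SimpleGraph V} {S : Set V}

lemma induce_adj_iff {x y : ↥S} : (G.induce S).Adj x y ↔ G.Adj ↑x ↑y := Iff.rfl

/-- a vertex on a geodesic walk is between the endpoints -/
lemma between_of_mem_support_geodesic (hconn : G.Connected) {x y m : V} (p : G.Walk x y)
    (hp : p.length = G.dist x y) (hm : m ∈ p.support) :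
    G.dist x m + G.dist m y = G.dist x y := by
  classical
  have h1 : G.dist x m ≤ (p.takeUntil m hm).length := SimpleGraph.dist_le _
  have h2 : G.dist m y ≤ (p.dropUntil m hm).length := SimpleGraph.dist_le _
  have h3 : (p.takeUntil m hm).length + (p.dropUntil m hm).length = p.length := by
    rw [← SimpleGraph.Walk.length_append, SimpleGraph.Walk.take_spec]
  have h4 : G.dist x y ≤ G.dist x m + G.dist m y := hconn.dist_triangle
  omega

/-- betweenness form of convexity of S -/
lemma convex_between (hconn : G.Connected) (hconv : ConvexSet G S) {x y m : V}
    (hx : x ∈ S) (hy : y ∈ S) (hbet : G.dist x m + G.dist m y = G.dist x y) : m ∈ S := by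
  obtain ⟨p, hp⟩ := (hconn x m).exists_walk_length_eq_dist
  obtain ⟨q, hq⟩ := (hconn m y).exists_walk_length_eq_dist
  have hlen : (p.append q).length = G.dist x y := by
    rw [SimpleGraph.Walk.length_append, hp, hq, hbet]
  exact hconv x hx y hy (p.append q) hlen m
    (by rw [SimpleGraph.Walk.mem_support_append_iff]; exact Or.inl (SimpleGraph.Walk.end_mem_support p))

lemma exists_induce_walk {x y : V} (p : G.Walk x y)
    (hsub : ∀ z ∈ p.support, z ∈ S) (hx : x ∈ S) (hy : y ∈ S) :
    ∃ q : (G.induce S).Walk ⟨x,hx⟩ ⟨y,hy⟩, q.length = p.length := by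
  induction p with
  | nil => exact ⟨SimpleGraph.Walk.nil, rfl⟩
  | @cons u v w h q ih =>
    have hv : v ∈ S := hsub v (by
      rw [SimpleGraph.Walk.support_cons]
      exact List.mem_cons_of_mem _ (SimpleGraph.Walk.start_mem_support q))
    obtain ⟨q', hq'⟩ := ih (fun z hz => hsub z (by
      rw [SimpleGraph.Walk.support_cons]
      exact List.mem_cons_of_mem _ hz)) hv hy
    exact ⟨SimpleGraph.Walk.cons (induce_adj_iff.mpr h) q', by simp [hq']⟩

lemma dist_induce (hconn : G.Connected) (hconv : ConvexSet G S) (u v : ↥S) :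
    (G.induce S).dist u v = G.dist ↑u ↑v := by
  obtain ⟨p, hp⟩ := (hconn ↑u ↑v).exists_walk_length_eq_dist
  have hsub : ∀ z ∈ p.support, z ∈ S := fun z hz => hconv ↑u u.2 ↑v v.2 p hp z hz
  obtain ⟨q, hq⟩ := exists_induce_walk p hsub u.2 v.2
  apply le_antisymm
  · calc (G.induce S).dist u v ≤ q.length := SimpleGraph.dist_le q
    _ = G.dist ↑u ↑v := by rw [hq, hp]
  · have hreach : (G.induce S).Reachable u v := ⟨q⟩
    obtain ⟨w', hw'⟩ := hreach.exists_walk_length_eq_dist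
    have hmap : G.dist ↑u ↑v ≤ (w'.map ⟨Subtype.val, fun h => h⟩).length := SimpleGraph.dist_le _
    rwa [SimpleGraph.Walk.length_map, hw'] at hmap

lemma sideW_induce (hconn : G.Connected) (hconv : ConvexSet G S) {x y : ↥S} (w : ↥S) :
    w ∈ sideW (G.induce S) x y ↔ ↑w ∈ sideW G ↑x ↑y := by
  show (G.induce S).dist x w < (G.induce S).dist y w ↔ G.dist ↑x ↑w < G.dist ↑y ↑w
  rw [dist_induce hconn hconv, dist_induce hconn hconv]

lemma dwrel_induce (hconn : G.Connected) (hconv : ConvexSet G S) {x y p q : ↥S} :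
    DWRel (G.induce S) s(x,y) s(p,q) ↔ DWRel G s(↑x,↑y) s(↑p,↑q) := by
  rw [dwrel_pair_iff, dwrel_pair_iff,
    dist_induce hconn hconv, dist_induce hconn hconv,
    dist_induce hconn hconv, dist_induce hconn hconv]

lemma thetaClassOf_induce (hconn : G.Connected) (hconv : ConvexSet G S) {e : Sym2 ↥S} :
    thetaClassOf (G.induce S) e = Sym2.map Subtype.val ⁻¹' thetaClassOf G (Sym2.map Subtype.val e) := by
  induction e using Sym2.ind with
  | _ x y =>
    ext f
    induction f using Sym2.ind with
    | _ p q =>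
      simp only [thetaClassOf, Set.mem_preimage, Set.mem_setOf_eq, Sym2.map_pair_eq]
      constructor
      · rintro ⟨hmem, hdw⟩
        exact ⟨(SimpleGraph.mem_edgeSet G).mpr
            (induce_adj_iff.mp ((SimpleGraph.mem_edgeSet (G.induce S)).mp hmem)),
          (dwrel_induce hconn hconv).mp hdw⟩
      · rintro ⟨hmem, hdw⟩
        exact ⟨(SimpleGraph.mem_edgeSet (G.induce S)).mpr
            (induce_adj_iff.mpr ((SimpleGraph.mem_edgeSet G).mp hmem)),
          (dwrel_induce hconn hconv).mpr hdw⟩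

end InduceLemmas
section Assembly

variable {V : Type*} {G : SimpleGraph V} {S : Set V}

lemma map_edge_mem {e : Sym2 ↥S} (he : e ∈ (G.induce S).edgeSet) :
    Sym2.map Subtype.val e ∈ G.edgeSet := by
  induction e using Sym2.ind with
  | _ x y =>
    rw [Sym2.map_pair_eq]
    exact (SimpleGraph.mem_edgeSet G).mpr
      (induce_adj_iff.mp ((SimpleGraph.mem_edgeSet (G.induce S)).mp he))

lemma occurs_of_edge {e : Sym2 ↥S} (he : e ∈ (G.induce S).edgeSet) :
    OccursIn G (thetaClassOf G (Sym2.map Subtype.val e)) S := by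
  induction e using Sym2.ind with
  | _ x y =>
    have hadj : G.Adj ↑x ↑y := induce_adj_iff.mp ((SimpleGraph.mem_edgeSet (G.induce S)).mp he)
    refine ⟨↑x, ↑y, hadj, x.2, y.2, ?_⟩
    rw [Sym2.map_pair_eq]
    exact mem_thetaClassOf_self hadj

lemma isTheta_eq_of_mem (hmed : IsMedianGraph G) {C : Set (Sym2 V)} (hC : IsThetaClass G C)
    {a b : V} (hab : G.Adj a b) (hmem : s(a,b) ∈ C) : C = thetaClassOf G s(a,b) := by
  obtain ⟨e₀, he₀, rfl⟩ := hC
  induction e₀ using Sym2.ind with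
  | _ p q =>
    exact (thetaClassOf_eq_of_mem hmed ((SimpleGraph.mem_edgeSet G).mp he₀) hmem).symm

lemma classG_eq_of_classH_eq (hmed : IsMedianGraph G) (hconv : ConvexSet G S)
    {e : Sym2 ↥S} (he : e ∈ (G.induce S).edgeSet) {x y : ↥S} (hxy : (G.induce S).Adj x y)
    (h : thetaClassOf (G.induce S) e = thetaClassOf (G.induce S) s(x,y)) :
    thetaClassOf G (Sym2.map Subtype.val e) = thetaClassOf G s((↑x : V), ↑y) := by
  induction e using Sym2.ind with
  | _ p q =>
    have hmemH : s(x,y) ∈ thetaClassOf (G.induce S) s(p,q) := h ▸ mem_thetaClassOf_self hxy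
    rw [thetaClassOf_induce hmed.1 hconv] at hmemH
    have hmemG := hmemH
    rw [Set.mem_preimage, Sym2.map_pair_eq] at hmemG
    have hpq : G.Adj ↑p ↑q := induce_adj_iff.mp ((SimpleGraph.mem_edgeSet _).mp he)
    rw [Sym2.map_pair_eq] at hmemG ⊢
    exact (thetaClassOf_eq_of_mem hmed hpq hmemG).symm

lemma quad_nonempty (hmed : IsMedianGraph G) (hconv : ConvexSet G S)
    {a b u v s₁ s₂ : V} (hab : G.Adj a b) (huv : G.Adj u v)
    (hs₁S : s₁ ∈ S) (hs₂S : s₂ ∈ S) (hs₁ : s₁ ∈ sideW G a b) (hs₂ : s₂ ∈ sideW G u v)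
    (hne : (sideW G a b ∩ sideW G u v).Nonempty) :
    ∃ m ∈ S, m ∈ sideW G a b ∧ m ∈ sideW G u v := by
  obtain ⟨g, hg1, hg2⟩ := hne
  obtain ⟨m, h1, h2, h3⟩ := median_exists hmed s₁ s₂ g
  exact ⟨m, convex_between hmed.1 hconv hs₁S hs₂S h1,
    sideW_convex hmed hab hs₁ hg1 h2, sideW_convex hmed huv hs₂ hg2 h3⟩

lemma crosses_H_of_oriented (hmed : IsMedianGraph G) (hconv : ConvexSet G S)
    {a b u v : V} (hab : G.Adj a b) (huv : G.Adj u v)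
    {x y p q : ↥S} (hxy : (G.induce S).Adj x y) (hpq : (G.induce S).Adj p q)
    (hx : ↑x ∈ sideW G a b) (hy : ↑y ∈ sideW G b a)
    (hp : ↑p ∈ sideW G u v) (hq : ↑q ∈ sideW G v u)
    (n1 : (sideW G a b ∩ sideW G u v).Nonempty) (n2 : (sideW G b a ∩ sideW G u v).Nonempty)
    (n3 : (sideW G a b ∩ sideW G v u).Nonempty) (n4 : (sideW G b a ∩ sideW G v u).Nonempty) :
    Crosses (G.induce S) (thetaClassOf (G.induce S) s(x,y))
      (thetaClassOf (G.induce S) s(p,q)) := by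
  have hconn := hmed.1
  have hxyG : G.Adj ↑x ↑y := induce_adj_iff.mp hxy
  have hpqG : G.Adj ↑p ↑q := induce_adj_iff.mp hpq
  have hcx : sideW G ↑x ↑y = sideW G a b := sideW_cut_eq hmed hab hxyG hx hy
  have hcx' : sideW G ↑y ↑x = sideW G b a := sideW_cut_eq hmed hab.symm hxyG.symm hy hx
  have hcp : sideW G ↑p ↑q = sideW G u v := sideW_cut_eq hmed huv hpqG hp hq
  have hcp' : sideW G ↑q ↑p = sideW G v u := sideW_cut_eq hmed huv.symm hpqG.symm hq hp
  refine ⟨x, y, p, q, hxy, hpq, rfl, rfl, ?_, ?_, ?_, ?_⟩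
  · obtain ⟨m, hmS, hm1, hm2⟩ := quad_nonempty hmed hconv hab huv x.2 p.2 hx hp n1
    exact ⟨⟨m, hmS⟩, (sideW_induce hconn hconv _).mpr (by rw [hcx]; exact hm1),
      (sideW_induce hconn hconv _).mpr (by rw [hcp]; exact hm2)⟩
  · obtain ⟨m, hmS, hm1, hm2⟩ := quad_nonempty hmed hconv hab.symm huv y.2 p.2 hy hp n2
    exact ⟨⟨m, hmS⟩, (sideW_induce hconn hconv _).mpr (by rw [hcx']; exact hm1),
      (sideW_induce hconn hconv _).mpr (by rw [hcp]; exact hm2)⟩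
  · obtain ⟨m, hmS, hm1, hm2⟩ := quad_nonempty hmed hconv hab huv.symm x.2 q.2 hx hq n3
    exact ⟨⟨m, hmS⟩, (sideW_induce hconn hconv _).mpr (by rw [hcx]; exact hm1),
      (sideW_induce hconn hconv _).mpr (by rw [hcp']; exact hm2)⟩
  · obtain ⟨m, hmS, hm1, hm2⟩ := quad_nonempty hmed hconv hab.symm huv.symm y.2 q.2 hy hq n4
    exact ⟨⟨m, hmS⟩, (sideW_induce hconn hconv _).mpr (by rw [hcx']; exact hm1),
      (sideW_induce hconn hconv _).mpr (by rw [hcp']; exact hm2)⟩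

lemma crosses_transfer (hmed : IsMedianGraph G) (hconv : ConvexSet G S)
    {e₁ e₂ : Sym2 ↥S} (h₁ : e₁ ∈ (G.induce S).edgeSet) (h₂ : e₂ ∈ (G.induce S).edgeSet) :
    Crosses (G.induce S) (thetaClassOf (G.induce S) e₁) (thetaClassOf (G.induce S) e₂) ↔
      Crosses G (thetaClassOf G (Sym2.map Subtype.val e₁))
        (thetaClassOf G (Sym2.map Subtype.val e₂)) := by
  have hconn := hmed.1
  constructor
  · rintro ⟨x, y, p, q, hxy, hpq, hc1, hc2, n1, n2, n3, n4⟩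
    refine ⟨↑x, ↑y, ↑p, ↑q, induce_adj_iff.mp hxy, induce_adj_iff.mp hpq,
      classG_eq_of_classH_eq hmed hconv h₁ hxy hc1,
      classG_eq_of_classH_eq hmed hconv h₂ hpq hc2, ?_, ?_, ?_, ?_⟩
    · obtain ⟨w, hw1, hw2⟩ := n1
      exact ⟨↑w, (sideW_induce hconn hconv _).mp hw1, (sideW_induce hconn hconv _).mp hw2⟩
    · obtain ⟨w, hw1, hw2⟩ := n2
      exact ⟨↑w, (sideW_induce hconn hconv _).mp hw1, (sideW_induce hconn hconv _).mp hw2⟩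
    · obtain ⟨w, hw1, hw2⟩ := n3
      exact ⟨↑w, (sideW_induce hconn hconv _).mp hw1, (sideW_induce hconn hconv _).mp hw2⟩
    · obtain ⟨w, hw1, hw2⟩ := n4
      exact ⟨↑w, (sideW_induce hconn hconv _).mp hw1, (sideW_induce hconn hconv _).mp hw2⟩
  · induction e₁ using Sym2.ind with
  | _ x y =>
    induction e₂ using Sym2.ind with
    | _ p q =>
      rintro ⟨a, b, u, v, hab, huv, hc1, hc2, n1, n2, n3, n4⟩
      have hxyH : (G.induce S).Adj x y := (SimpleGraph.mem_edgeSet _).mp h₁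
      have hpqH : (G.induce S).Adj p q := (SimpleGraph.mem_edgeSet _).mp h₂
      have hxyG : G.Adj ↑x ↑y := induce_adj_iff.mp hxyH
      have hpqG : G.Adj ↑p ↑q := induce_adj_iff.mp hpqH
      rw [Sym2.map_pair_eq] at hc1
      rw [Sym2.map_pair_eq] at hc2
      have hm1 : s((↑x : V), ↑y) ∈ thetaClassOf G s(a,b) := hc1 ▸ mem_thetaClassOf_self hxyG
      have hm2 : s((↑p : V), ↑q) ∈ thetaClassOf G s(u,v) := hc2 ▸ mem_thetaClassOf_self hpqG
      rw [mem_thetaClassOf_iff hmed hab hxyG] at hm1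
      rw [mem_thetaClassOf_iff hmed huv hpqG] at hm2
      rcases hm1 with ⟨hx1, hy1⟩ | ⟨hy1, hx1⟩ <;> rcases hm2 with ⟨hp1, hq1⟩ | ⟨hq1, hp1⟩
      · exact crosses_H_of_oriented hmed hconv hab huv hxyH hpqH hx1 hy1 hp1 hq1 n1 n2 n3 n4
      · have h := crosses_H_of_oriented hmed hconv hab huv hxyH hpqH.symm hx1 hy1 hq1 hp1
          n1 n2 n3 n4
        rwa [show s(q,p) = s(p,q) from Sym2.eq_swap] at h
      · have h := crosses_H_of_oriented hmed hconv hab huv hxyH.symm hpqH hy1 hx1 hp1 hq1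
          n1 n2 n3 n4
        rwa [show s(y,x) = s(x,y) from Sym2.eq_swap] at h
      · have h := crosses_H_of_oriented hmed hconv hab huv hxyH.symm hpqH.symm hy1 hx1 hq1 hp1
          n1 n2 n3 n4
        rwa [show s(y,x) = s(x,y) from Sym2.eq_swap,
          show s(q,p) = s(p,q) from Sym2.eq_swap] at h

end Assembly
/-- For a convex subgraph `H = G[S]` of a finite median graph `G`, the
crossing graph `H^#` is isomorphic to the subgraph of `G^#` induced on the Θ-classes of `G`
occurring in `H`, via the map sending each Θ-class of `H` to the (unique) Θ-class of `G`
containing (the image of) each of its edges. -/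
theorem crossingGraph_of_convex_is_induced_subgraph {V : Type*} [Finite V]
    (G : SimpleGraph V) (hmed : IsMedianGraph G) (S : Set V) (hconv : ConvexSet G S) :
    ∃ φ : (crossingGraph (G.induce S)) ≃g
        ((crossingGraph G).induce
          {C : {D : Set (Sym2 V) // IsThetaClass G D} | OccursIn G C.1 S}),
      ∀ (D : {C : Set (Sym2 ↥S) // IsThetaClass (G.induce S) C}) (e : Sym2 ↥S),
        e ∈ D.1 → Sym2.map Subtype.val e ∈ ((φ D).1 : {D : Set (Sym2 V) // IsThetaClass G D}).1 := by
  classical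
  have hconn := hmed.1
  have hsel : ∀ D : {C : Set (Sym2 ↥S) // IsThetaClass (G.induce S) C},
      ∃ e, e ∈ (G.induce S).edgeSet ∧ D.1 = thetaClassOf (G.induce S) e := by
    intro D
    obtain ⟨e, he, hC⟩ := D.2
    exact ⟨e, he, hC⟩
  choose sel hsel1 hsel2 using hsel
  let Φ : {C : Set (Sym2 ↥S) // IsThetaClass (G.induce S) C} →
      ↥{C : {D : Set (Sym2 V) // IsThetaClass G D} | OccursIn G C.1 S} :=
    fun D => ⟨⟨thetaClassOf G (Sym2.map Subtype.val (sel D)),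
      ⟨Sym2.map Subtype.val (sel D), map_edge_mem (hsel1 D), rfl⟩⟩,
      occurs_of_edge (hsel1 D)⟩
  have hpull : ∀ D, D.1 = Sym2.map Subtype.val ⁻¹'
      thetaClassOf G (Sym2.map Subtype.val (sel D)) :=
    fun D => (hsel2 D).trans (thetaClassOf_induce hconn hconv)
  have hinj : Function.Injective Φ := by
    intro D₁ D₂ h
    have h' : thetaClassOf G (Sym2.map Subtype.val (sel D₁)) =
        thetaClassOf G (Sym2.map Subtype.val (sel D₂)) :=
      congrArg (fun z => z.1.1) h
    exact Subtype.ext ((hpull D₁).trans (by rw [h']; exact (hpull D₂).symm))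
  have hsurj : Function.Surjective Φ := by
    rintro ⟨⟨C, hC⟩, hOcc⟩
    obtain ⟨a, b, hab, haS, hbS, habC⟩ := hOcc
    have hCeq : C = thetaClassOf G s(a,b) := isTheta_eq_of_mem hmed hC hab habC
    have hxy : (G.induce S).Adj ⟨a,haS⟩ ⟨b,hbS⟩ := induce_adj_iff.mpr hab
    refine ⟨⟨thetaClassOf (G.induce S) s(⟨a,haS⟩,⟨b,hbS⟩),
      ⟨s(⟨a,haS⟩,⟨b,hbS⟩), (SimpleGraph.mem_edgeSet _).mpr hxy, rfl⟩⟩, ?_⟩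
    apply Subtype.ext
    apply Subtype.ext
    show thetaClassOf G (Sym2.map Subtype.val (sel _)) = C
    rw [hCeq]
    exact classG_eq_of_classH_eq hmed hconv (hsel1 _) hxy ((hsel2 _).symm)
  have hadj : ∀ D₁ D₂ : {C : Set (Sym2 ↥S) // IsThetaClass (G.induce S) C},
      ((crossingGraph G).induce
        {C : {D : Set (Sym2 V) // IsThetaClass G D} | OccursIn G C.1 S}).Adj (Φ D₁) (Φ D₂) ↔
      (crossingGraph (G.induce S)).Adj D₁ D₂ := by
    intro D₁ D₂
    show ((Φ D₁).1 ≠ (Φ D₂).1 ∧ Crosses G (Φ D₁).1.1 (Φ D₂).1.1) ↔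
      (D₁ ≠ D₂ ∧ Crosses (G.induce S) D₁.1 D₂.1)
    constructor
    · rintro ⟨hne, hcr⟩
      refine ⟨fun h => hne (congrArg (fun D => (Φ D).1) h), ?_⟩
      rw [hsel2 D₁, hsel2 D₂]
      exact (crosses_transfer hmed hconv (hsel1 D₁) (hsel1 D₂)).mpr hcr
    · rintro ⟨hne, hcr⟩
      refine ⟨fun h => hne (hinj (Subtype.ext h)), ?_⟩
      rw [hsel2 D₁, hsel2 D₂] at hcr
      exact (crosses_transfer hmed hconv (hsel1 D₁) (hsel1 D₂)).mp hcr
  refine ⟨⟨Equiv.ofBijective Φ ⟨hinj, hsurj⟩, ?_⟩, ?_⟩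
  · intro D₁ D₂
    exact hadj D₁ D₂
  · intro D e he
    rw [hpull D] at he
    exact he
end

section
/- Let G be a finite connected partial cube and H a connected subgraph of G. Then the set of Θ-classes of G occurring in H equals the set of Θ-classes of G occurring in the convex hull co_G(H) of H in G. -/
open SimpleGraph Polynomial

section AuxLemmas

lemma bool_eq_of_ne_ne {x y z : Bool} (h1 : x ≠ z) (h2 : y ≠ z) : x = y := by
  revert h1 h2; cases x <;> cases y <;> cases z <;> decide

lemma hammingDist_card (x y : ∀ _ : Fin 3, Bool) :
    hammingDist x y = (Finset.univ.filter (fun i => x i ≠ y i)).card := rfl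

lemma hypercube_adj_iff {n : ℕ} {x y : Fin n → Bool} :
    (hypercube n).Adj x y ↔ hammingDist x y = 1 := by
  constructor
  · rintro ⟨i, hi, hu⟩
    have : (Finset.univ.filter (fun j => x j ≠ y j)) = {i} := by
      ext j
      simp only [Finset.mem_filter, Finset.mem_univ, true_and, Finset.mem_singleton]
      exact ⟨fun h => hu j h, fun h => h ▸ hi⟩
    simp [hammingDist, this]
  · intro h
    obtain ⟨i, hi⟩ := Finset.card_eq_one.mp h
    have him : i ∈ Finset.univ.filter (fun j => x j ≠ y j) := hi ▸ Finset.mem_singleton_self i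
    refine ⟨i, by simpa using him, fun j hj => ?_⟩
    have : j ∈ Finset.univ.filter (fun j => x j ≠ y j) := by simpa using hj
    rw [hi] at this; simpa using this

lemma hamming_le_walk {n : ℕ} {x y : Fin n → Bool} (p : (hypercube n).Walk x y) :
    hammingDist x y ≤ p.length := by
  induction p with
  | nil => simp
  | @cons u v w h q ih =>
    have ht : hammingDist u w ≤ hammingDist u v + hammingDist v w := hammingDist_triangle _ _ _
    have ha : hammingDist u v = 1 := hypercube_adj_iff.mp h
    simp only [SimpleGraph.Walk.length_cons]
    omega

lemma exists_walk_hamming {n : ℕ} : ∀ (d : ℕ) (x y : Fin n → Bool), hammingDist x y = d →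
    ∃ p : (hypercube n).Walk x y, p.length = d := by
  intro d
  induction d with
  | zero =>
    intro x y h
    obtain rfl := eq_of_hammingDist_eq_zero h
    exact ⟨SimpleGraph.Walk.nil, rfl⟩
  | succ d ih =>
    intro x y h
    have hne : (Finset.univ.filter (fun j => x j ≠ y j)).Nonempty := by
      rw [← Finset.card_pos]
      have : (Finset.univ.filter (fun j => x j ≠ y j)).card = d + 1 := h
      omega
    obtain ⟨i, hi⟩ := hne
    have hxyi : x i ≠ y i := by simpa using hi
    set x' := Function.update x i (y i) with hx'
    have hadj : (hypercube n).Adj x x' := by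
      refine ⟨i, by simp [hx', Function.update_self, hxyi], fun j hj => ?_⟩
      by_contra hji
      exact hj (by rw [hx', Function.update_of_ne hji] at hj; exact absurd rfl hj)
    have hstep : hammingDist x' y = d := by
      have hset : (Finset.univ.filter (fun j => x' j ≠ y j))
          = (Finset.univ.filter (fun j => x j ≠ y j)).erase i := by
        ext j
        rcases eq_or_ne j i with rfl | hj
        · simp [hx', Function.update_self]
        · simp [hx', Function.update_of_ne hj, hj]
      have : hammingDist x' y = ((Finset.univ.filter (fun j => x j ≠ y j)).erase i).card := by
        rw [← hset]; rfl
      rw [this, Finset.card_erase_of_mem hi]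
      have h' : (Finset.univ.filter (fun j => x j ≠ y j)).card = d + 1 := h
      omega
    obtain ⟨p, hp⟩ := ih x' y hstep
    exact ⟨SimpleGraph.Walk.cons hadj p, by simp [hp]⟩

lemma hypercube_dist {n : ℕ} (x y : Fin n → Bool) :
    (hypercube n).dist x y = hammingDist x y := by
  obtain ⟨p, hp⟩ := exists_walk_hamming (hammingDist x y) x y rfl
  refine le_antisymm (hp ▸ SimpleGraph.dist_le p) ?_
  obtain ⟨q, hq⟩ := (p.reachable).exists_walk_length_eq_dist
  exact hq ▸ hamming_le_walk q

lemma hamming_between {n : ℕ} {x y z : Fin n → Bool}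
    (h : hammingDist x y + hammingDist y z = hammingDist x z) {i : Fin n}
    (hxz : x i = z i) : y i = x i := by
  by_contra hyx
  set A := Finset.univ.filter (fun j => x j ≠ y j) with hA
  set B := Finset.univ.filter (fun j => y j ≠ z j) with hB
  set C := Finset.univ.filter (fun j => x j ≠ z j) with hC
  have hCsub : C ⊆ A ∪ B := by
    intro j hj
    simp only [hC, Finset.mem_filter, Finset.mem_univ, true_and] at hj
    simp only [hA, hB, Finset.mem_union, Finset.mem_filter, Finset.mem_univ, true_and]
    by_contra hcon
    push_neg at hcon
    exact hj (hcon.1.trans hcon.2)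
  have hiA : i ∈ A := by
    simp only [hA, Finset.mem_filter, Finset.mem_univ, true_and]
    exact fun h => hyx h.symm
  have hiB : i ∈ B := by
    simp only [hB, Finset.mem_filter, Finset.mem_univ, true_and]
    intro hcon
    exact hyx (hcon.trans hxz.symm)
  have h1 : C.card ≤ (A ∪ B).card := Finset.card_le_card hCsub
  have h2 : (A ∪ B).card + (A ∩ B).card = A.card + B.card := Finset.card_union_add_card_inter A B
  have h3 : 0 < (A ∩ B).card := Finset.card_pos.mpr ⟨i, Finset.mem_inter.mpr ⟨hiA, hiB⟩⟩
  have hA' : hammingDist x y = A.card := rfl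
  have hB' : hammingDist y z = B.card := rfl
  have hC' : hammingDist x z = C.card := rfl
  omega

end AuxLemmas

/-- In a finite connected partial cube `G`, a Θ-class occurs in a connected
subgraph `H` iff it occurs in the convex hull `co_G(H)` of `H` in `G`. -/
theorem occursIn_iff_occursIn_convexHull {V : Type*} [Finite V] (G : SimpleGraph V)
    (hpc : IsPartialCube G) (H : G.Subgraph) (hconn : H.Connected)
    (θ : Set (Sym2 V)) (hθ : IsThetaClass G θ) :
    (∃ a b : V, H.Adj a b ∧ s(a, b) ∈ θ) ↔ OccursIn G θ (gConvexHull G H.verts) := by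
  classical
  obtain ⟨hGconn, n, f, hfinj, hfdist⟩ := hpc
  have hhull : H.verts ⊆ gConvexHull G H.verts := fun w hw =>
    Set.mem_sInter.mpr fun T hT => hT.2 hw
  obtain ⟨e, he, rfl⟩ := hθ
  revert he
  induction e using Sym2.ind with | _ a b => ?_
  intro he
  have hab : G.Adj a b := he
  -- distances transfer to Hamming distances
  have hd : ∀ u v : V, G.dist u v = hammingDist (f u) (f v) := fun u v => by
    rw [← hfdist u v, hypercube_dist]
  -- the coordinate flipped by the edge ab
  have hab1 : hammingDist (f a) (f b) = 1 := by
    rw [← hd]; exact SimpleGraph.dist_eq_one_iff_adj.mpr hab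
  obtain ⟨i, hi, huniq⟩ := hypercube_adj_iff.mpr hab1
  have hagree : ∀ j : Fin n, j ≠ i → f a j = f b j := fun j hj => by
    by_contra hc
    exact hj (huniq j hc)
  -- the step lemma: distances to a and b differ by one according to coordinate i
  have hstep : ∀ w : V, (f w i = f a i → G.dist b w = G.dist a w + 1) ∧
      (f w i ≠ f a i → G.dist a w = G.dist b w + 1) := by
    intro w
    set A := Finset.univ.filter (fun j => f a j ≠ f w j) with hA
    set B := Finset.univ.filter (fun j => f b j ≠ f w j) with hB
    have hdaw : G.dist a w = A.card := by rw [hd]; rfl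
    have hdbw : G.dist b w = B.card := by rw [hd]; rfl
    constructor
    · intro hw
      have hBA : B = insert i A := by
        ext j
        rcases eq_or_ne j i with rfl | hj
        · refine ⟨fun _ => Finset.mem_insert_self _ _, fun _ => ?_⟩
          simp only [hB, Finset.mem_filter, Finset.mem_univ, true_and]
          rw [hw]
          exact fun h => hi h.symm
        · simp only [hB, hA, Finset.mem_filter, Finset.mem_univ, true_and, Finset.mem_insert,
            hj, false_or, hagree j hj]
      have hiA : i ∉ A := by
        simp only [hA, Finset.mem_filter, Finset.mem_univ, true_and, not_not]
        exact hw.symm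
      rw [hdaw, hdbw, hBA, Finset.card_insert_of_notMem hiA]
    · intro hw
      have hAB : A = insert i B := by
        ext j
        rcases eq_or_ne j i with rfl | hj
        · refine ⟨fun _ => Finset.mem_insert_self _ _, fun _ => ?_⟩
          simp only [hA, Finset.mem_filter, Finset.mem_univ, true_and]
          exact fun h => hw h.symm
        · simp only [hB, hA, Finset.mem_filter, Finset.mem_univ, true_and, Finset.mem_insert,
            hj, false_or, hagree j hj]
      have hiB : i ∉ B := by
        simp only [hB, Finset.mem_filter, Finset.mem_univ, true_and, not_not]
        exact bool_eq_of_ne_ne (fun h => hi h.symm) hw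
      rw [hdaw, hdbw, hAB, Finset.card_insert_of_notMem hiB]
  -- the key numeric characterization
  have key : ∀ x y : V, (f x i ≠ f y i ↔
      G.dist a x + G.dist b y ≠ G.dist a y + G.dist b x) := by
    intro x y
    obtain ⟨hx1, hx2⟩ := hstep x
    obtain ⟨hy1, hy2⟩ := hstep y
    by_cases h1 : f x i = f a i <;> by_cases h2 : f y i = f a i
    · have e1 := hx1 h1; have e2 := hy1 h2
      have hxy : f x i = f y i := h1.trans h2.symm
      have heq : G.dist a x + G.dist b y = G.dist a y + G.dist b x := by omega
      exact ⟨fun hc => absurd hxy hc, fun hc => absurd heq hc⟩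
    · have e1 := hx1 h1; have e2 := hy2 h2
      have hxy : f x i ≠ f y i := fun h => h2 (h.symm.trans h1)
      exact ⟨fun _ => by omega, fun _ => hxy⟩
    · have e1 := hx2 h1; have e2 := hy1 h2
      have hxy : f x i ≠ f y i := fun h => h1 (h.trans h2)
      exact ⟨fun _ => by omega, fun _ => hxy⟩
    · have e1 := hx2 h1; have e2 := hy2 h2
      have hxy : f x i = f y i := bool_eq_of_ne_ne h1 h2
      have heq : G.dist a x + G.dist b y = G.dist a y + G.dist b x := by omega
      exact ⟨fun hc => absurd hxy hc, fun hc => absurd heq hc⟩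
  -- characterization of membership in the Θ-class
  have hchar : ∀ x y : V, G.Adj x y →
      (s(x, y) ∈ thetaClassOf G s(a, b) ↔ f x i ≠ f y i) := by
    intro x y hxy
    constructor
    · rintro ⟨-, u, v, x', y', h1, h2, hne⟩
      rw [Sym2.eq_iff] at h1 h2
      rw [key x y]
      rcases h1 with ⟨rfl, rfl⟩ | ⟨rfl, rfl⟩ <;> rcases h2 with ⟨rfl, rfl⟩ | ⟨rfl, rfl⟩ <;>
        · intro hc; apply hne; omega
    · intro hne
      exact ⟨(SimpleGraph.mem_edgeSet G).mpr hxy, a, b, x, y, rfl, rfl, (key x y).mp hne⟩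
  -- convexity of coordinate halfspaces
  have hconv : ∀ c : Bool, ConvexSet G {w : V | f w i = c} := by
    intro c u hu v hv p hp y hy
    have h1 : G.dist u y ≤ (p.takeUntil y hy).length := SimpleGraph.dist_le _
    have h2 : G.dist y v ≤ (p.dropUntil y hy).length := SimpleGraph.dist_le _
    have h3 : (p.takeUntil y hy).length + (p.dropUntil y hy).length = p.length := by
      have := congrArg SimpleGraph.Walk.length (p.take_spec hy)
      rwa [SimpleGraph.Walk.length_append] at this
    have h4 : G.dist u v ≤ G.dist u y + G.dist y v := hGconn.dist_triangle
    have heq : G.dist u y + G.dist y v = G.dist u v := by omega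
    rw [hd u y, hd y v, hd u v] at heq
    have hc : f u i = f v i := by rw [Set.mem_setOf_eq.mp hu, Set.mem_setOf_eq.mp hv]
    have := hamming_between heq hc
    rw [Set.mem_setOf_eq, this]
    exact hu
  constructor
  · rintro ⟨x, y, hxy, hmem⟩
    exact ⟨x, y, hxy.adj_sub, hhull (H.edge_vert hxy), hhull (H.edge_vert hxy.symm), hmem⟩
  · rintro ⟨x, y, hxy, hx, hy, hmem⟩
    by_contra hcon
    push_neg at hcon
    obtain ⟨v0, hv0⟩ := hconn.nonempty
    -- every vertex of H has the same i-th coordinate as v0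
    have hwalkconst : ∀ (u w : H.verts) (p : H.coe.Walk u w), f u.1 i = f w.1 i := by
      intro u w p
      induction p with
      | nil => rfl
      | @cons u' v' w' h q ih =>
        have hadj : H.Adj u'.1 v'.1 := h
        have hne := hcon u'.1 v'.1 hadj
        have : f u'.1 i = f v'.1 i := by
          by_contra hc
          exact hne ((hchar u'.1 v'.1 hadj.adj_sub).mpr hc)
        exact this.trans ih
    have hsame : ∀ w ∈ H.verts, f w i = f v0 i := by
      intro w hw
      obtain ⟨p⟩ := hconn ⟨w, hw⟩ ⟨v0, hv0⟩
      exact hwalkconst _ _ p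
    have hsub : gConvexHull G H.verts ⊆ {w : V | f w i = f v0 i} :=
      Set.sInter_subset_of_mem ⟨hconv (f v0 i), hsame⟩
    have hxc : f x i = f v0 i := hsub hx
    have hyc : f y i = f v0 i := hsub hy
    exact (hchar x y hxy).mp hmem (hxc.trans hyc.symm)
end
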